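/- Let S_λ be a weighted shift on a directed tree T = (V,E) with weights λ = {λ_v}_{v∈V°}. Fix u ∈ V and n ∈ ℤ₊. Then: (i) e_u ∈ D(S_λ^n) if and only if ∑_{v ∈ Chi^m(u)} |λ_{u|v}|² < ∞ for all integers m with 1 ≤ m ≤ n; (ii) if e_u ∈ D(S_λ^n), then S_λ^n e_u = ∑_{v ∈ Chi^n(u)} λ_{u|v} e_v; (iii) if e_u ∈ D(S_λ^n), then ‖S_λ^n e_u‖² = ∑_{v ∈ Chi^n(u)} |λ_{u|v}|². -/

import Mathlib

open MeasureTheory ENNReal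
open scoped NNReal
noncomputable section

/-- `μ` is a representing measure of the sequence `t`. -/
def IsRepMeasure (μ : Measure ℝ≥0) (t : ℕ → ℝ) : Prop :=
  ∀ n : ℕ, Integrable (fun s : ℝ≥0 => (s : ℝ) ^ n) μ ∧ t n = ∫ s, (s : ℝ) ^ n ∂μ

/-- `t` is a Stieltjes moment sequence. -/
def IsStieltjesMoment (t : ℕ → ℝ) : Prop := ∃ μ : Measure ℝ≥0, IsRepMeasure μ t

/-- `t` is a determinate Stieltjes moment sequence. -/
def IsDetStieltjesMoment (t : ℕ → ℝ) : Prop := ∃! μ : Measure ℝ≥0, IsRepMeasure μ t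

section Operators

universe u
variable {H : Type u} [NormedAddCommGroup H] [InnerProductSpace ℂ H]

/-- The maximal domain of the composition `S ∘ T`. -/
def compDomain (S T : H →ₗ.[ℂ] H) : Submodule ℂ H where
  carrier := {x | ∃ hx : x ∈ T.domain, T ⟨x, hx⟩ ∈ S.domain}
  zero_mem' := ⟨T.domain.zero_mem, by
    have h0 : (⟨0, T.domain.zero_mem⟩ : T.domain) = 0 := rfl
    rw [h0, LinearPMap.map_zero]; exact S.domain.zero_mem⟩
  add_mem' := by
    rintro x y ⟨hx, hx'⟩ ⟨hy, hy'⟩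
    refine ⟨T.domain.add_mem hx hy, ?_⟩
    have : (⟨x + y, T.domain.add_mem hx hy⟩ : T.domain) = ⟨x, hx⟩ + ⟨y, hy⟩ := rfl
    rw [this, LinearPMap.map_add]
    exact S.domain.add_mem hx' hy'
  smul_mem' := by
    rintro c x ⟨hx, hx'⟩
    refine ⟨T.domain.smul_mem c hx, ?_⟩
    have : (⟨c • x, T.domain.smul_mem c hx⟩ : T.domain) = c • (⟨x, hx⟩ : T.domain) := rfl
    rw [this, LinearPMap.map_smul]
    exact S.domain.smul_mem c hx'

/-- Composition `S ∘ T` of partial operators, on the maximal domain. -/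
def pmapComp (S T : H →ₗ.[ℂ] H) : H →ₗ.[ℂ] H :=
  S.comp (T.domRestrict (compDomain S T)) (by
    rintro ⟨x, hx⟩
    have hxT : x ∈ T.domain := (Submodule.mem_inf.mp hx).2
    have hxD : x ∈ compDomain S T := (Submodule.mem_inf.mp hx).1
    have e : T.domRestrict (compDomain S T) ⟨x, hx⟩ = T ⟨x, hxT⟩ := by
      first
        | exact LinearPMap.domRestrict_apply rfl
        | rfl
    rw [e]
    exact hxD.choose_spec)

/-- Powers of a partial operator: `pmapPow S n = Sⁿ` with its natural domain. -/
def pmapPow (S : H →ₗ.[ℂ] H) : ℕ → (H →ₗ.[ℂ] H)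
  | 0 => LinearMap.id.toPMap ⊤
  | n + 1 => pmapComp (pmapPow S n) S

open Classical in
/-- Total (junk-valued) application of the power `Sⁿ`. -/
def powApp (S : H →ₗ.[ℂ] H) (n : ℕ) (x : H) : H :=
  if h : x ∈ (pmapPow S n).domain then (pmapPow S n) ⟨x, h⟩ else 0

/-- The set of `C^∞`-vectors of `S`. -/
def Dinf (S : H →ₗ.[ℂ] H) : Set H := {x | ∀ n : ℕ, x ∈ (pmapPow S n).domain}

/-- `F` is a core of `S`. -/
def IsCore (S : H →ₗ.[ℂ] H) (F : Submodule ℂ H) : Prop :=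
  F ≤ S.domain ∧ (S.graph : Set (H × H)) ⊆ closure ((S.domRestrict F).graph : Set (H × H))

end Operators
section Operators
universe u
variable {H : Type u} [NormedAddCommGroup H] [InnerProductSpace ℂ H]

/-- A normal (unbounded) operator: closed, densely defined, with `D(N*) = D(N)` and
`‖N* x‖ = ‖N x‖` on the common domain. -/
def IsNormalOp [CompleteSpace H] (N : H →ₗ.[ℂ] H) : Prop :=
  Dense (N.domain : Set H) ∧ N.IsClosed ∧ N.adjoint.domain = N.domain ∧
    ∀ (x : H) (hx : x ∈ N.domain) (hx' : x ∈ N.adjoint.domain),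
      ‖N.adjoint ⟨x, hx'⟩‖ = ‖N ⟨x, hx⟩‖

/-- A subnormal operator: densely defined with a normal extension in a possibly
larger Hilbert space. -/
def IsSubnormal {H : Type u} [NormedAddCommGroup H] [InnerProductSpace ℂ H]
    (S : H →ₗ.[ℂ] H) : Prop :=
  Dense (S.domain : Set H) ∧
  ∃ (K : Type u) (_ : NormedAddCommGroup K) (_ : InnerProductSpace ℂ K) (_ : CompleteSpace K)
    (J : H →ₗᵢ[ℂ] K) (N : K →ₗ.[ℂ] K), IsNormalOp N ∧
      ∀ x : S.domain, ∃ hx : J x ∈ N.domain, N ⟨J x, hx⟩ = J (S x)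

/-- A hyponormal operator. -/
def IsHyponormal [CompleteSpace H] (S : H →ₗ.[ℂ] H) : Prop :=
  Dense (S.domain : Set H) ∧
  ∀ (x : H) (hx : x ∈ S.domain), ∃ hx' : x ∈ S.adjoint.domain,
      ‖S.adjoint ⟨x, hx'⟩‖ ≤ ‖S ⟨x, hx⟩‖

end Operators

/-- A directed tree on the vertex set `V`: a connected directed graph without circuits
in which every non-root vertex has a unique parent. -/
structure DirectedTree (V : Type*) where
  edge : V → V → Prop
  connected : ∀ u v : V, Relation.ReflTransGen (fun a b => edge a b ∨ edge b a) u v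
  no_circuits : ∀ v : V, ¬ Relation.TransGen edge v v
  parent_unique : ∀ u v w : V, edge v u → edge w u → v = w

namespace DirectedTree

variable {V : Type*}

/-- The roots: vertices with no incoming edge. -/
def isRoot (T : DirectedTree V) (v : V) : Prop := ¬ ∃ u : V, T.edge u v

/-- `V°`: the non-root vertices, i.e. vertices having a parent. -/
def nonRoot (T : DirectedTree V) (v : V) : Prop := ∃ u : V, T.edge u v

open Classical in
/-- The parent function (with junk value at roots). -/
def par (T : DirectedTree V) (v : V) : V := if h : ∃ u : V, T.edge u v then h.choose else v

/-- The set of children of a vertex. -/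
def chi (T : DirectedTree V) (u : V) : Set V := {v | T.edge u v}

/-- Iterated children `Chi^n(u)`. -/
def chiN (T : DirectedTree V) : ℕ → V → Set V
  | 0, u => {u}
  | n + 1, u => ⋃ w ∈ T.chiN n u, T.chi w

/-- The descendants of `u`. -/
def des (T : DirectedTree V) (u : V) : Set V := ⋃ n : ℕ, T.chiN n u

/-- `T` is leafless: every vertex has a child. -/
def Leafless (T : DirectedTree V) : Prop := ∀ u : V, ∃ v : V, T.edge u v

/-- The product `λ_{u∣v} = ∏_{j=0}^{n-1} λ_{par^j(v)}` of the weights along the path of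
length `n` ending at `v` (for `v ∈ Chi^n(u)` this is the usual `λ_{u∣v}`). -/
def pathProd (T : DirectedTree V) (lam : V → ℂ) (n : ℕ) (v : V) : ℂ :=
  ∏ j ∈ Finset.range n, lam (T.par^[j] v)

open Classical in
/-- The formal weighted-shift transformation `Λ_T` on families of complex numbers. -/
def lamMap (T : DirectedTree V) (lam : V → ℂ) (f : V → ℂ) : V → ℂ :=
  fun v => if T.nonRoot v then lam v * f (T.par v) else 0

variable (T : DirectedTree V)

theorem lamMap_add (lam : V → ℂ) (f g : V → ℂ) :
    T.lamMap lam (f + g) = T.lamMap lam f + T.lamMap lam g := by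
  funext v; simp only [lamMap, Pi.add_apply]; split <;> ring

theorem lamMap_smul (lam : V → ℂ) (c : ℂ) (f : V → ℂ) :
    T.lamMap lam (c • f) = c • T.lamMap lam f := by
  funext v; simp only [lamMap, Pi.smul_apply, smul_eq_mul]; split <;> ring

theorem lamMap_zero (lam : V → ℂ) : T.lamMap lam (0 : V → ℂ) = 0 := by
  funext v; simp [lamMap]

/-- The domain of the weighted shift `S_λ`. -/
def shiftDomain (lam : V → ℂ) : Submodule ℂ (lp (fun _ : V => ℂ) 2) where
  carrier := {f | Memℓp (T.lamMap lam f) 2}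
  zero_mem' := by
    rw [Set.mem_setOf_eq, lp.coeFn_zero, lamMap_zero]
    exact zero_memℓp
  add_mem' := by
    intro f g hf hg
    rw [Set.mem_setOf_eq, lp.coeFn_add, lamMap_add]
    exact hf.add hg
  smul_mem' := by
    intro c f hf
    rw [Set.mem_setOf_eq, lp.coeFn_smul, lamMap_smul]
    exact hf.const_smul c

/-- The weighted shift `S_λ` on the directed tree `T`, as a partial operator in `ℓ²(V)`. -/
def shift (lam : V → ℂ) : lp (fun _ : V => ℂ) 2 →ₗ.[ℂ] lp (fun _ : V => ℂ) 2 where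
  domain := T.shiftDomain lam
  toFun :=
    { toFun := fun f => (⟨T.lamMap lam f, f.2⟩ : lp (fun _ : V => ℂ) 2)
      map_add' := by
        rintro f g
        apply lp.ext
        rw [lp.coeFn_add]
        show T.lamMap lam
            ((((f : lp (fun _ : V => ℂ) 2) : V → ℂ)) + (((g : lp (fun _ : V => ℂ) 2) : V → ℂ)))
          = T.lamMap lam ((f : lp (fun _ : V => ℂ) 2) : V → ℂ)
            + T.lamMap lam ((g : lp (fun _ : V => ℂ) 2) : V → ℂ)
        exact T.lamMap_add lam _ _
      map_smul' := by
        rintro c f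
        apply lp.ext
        rw [lp.coeFn_smul]
        show T.lamMap lam (c • (((f : lp (fun _ : V => ℂ) 2) : V → ℂ)))
          = c • T.lamMap lam ((f : lp (fun _ : V => ℂ) 2) : V → ℂ)
        exact T.lamMap_smul lam c _ }

end DirectedTree

open Classical in
/-- The basis vector `e_u` of `ℓ²(V)`. -/
def eVec {V : Type*} (u : V) : lp (fun _ : V => ℂ) 2 := lp.single 2 u 1

section MoreDefs
universe u
variable {H : Type u} [NormedAddCommGroup H] [InnerProductSpace ℂ H]

/-- The inner product, linear in the FIRST argument (the paper's convention). -/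
def innerPaper (x y : H) : ℂ := inner ℂ y x

/-- The moment sequence `n ↦ ‖Sⁿ f‖²` generated by the vector `f`. -/
def momentSeq (S : H →ₗ.[ℂ] H) (f : H) : ℕ → ℝ := fun n => ‖powApp S n f‖ ^ 2

/-- `f` is a quasi-analytic vector of `S` : `f ∈ D^∞(S)` and
`∑ₙ ‖Sⁿ f‖^{-1/n} = ∞` (with `1/0 = ∞`). -/
def IsQuasiAnalyticVec (S : H →ₗ.[ℂ] H) (f : H) : Prop :=
  (∀ n : ℕ, f ∈ (pmapPow S n).domain) ∧
  ∑' n : ℕ, ((‖powApp S (n + 1) f‖₊ ^ ((1 : ℝ) / (n + 1)) : ℝ≥0) : ℝ≥0∞)⁻¹ = ∞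

end MoreDefs

/-- The consistency condition `μ_u(σ) = ∑_{v ∈ Chi(u)} |λ_v|² ∫_σ (1/s) dμ_v(s) + ε_u δ₀(σ)`
at the vertex `u` (with the convention `1/0 = ∞`). -/
def consistentAt {V : Type*} (T : DirectedTree V) (lam : V → ℂ) (μ : V → MeasureTheory.Measure ℝ≥0)
    (ε : V → ℝ≥0) (u : V) : Prop :=
  ∀ σ : Set ℝ≥0, MeasurableSet σ →
    μ u σ = (∑' v : {v : V // T.edge u v},
        (‖lam (v : V)‖₊ : ℝ≥0∞) ^ 2 * ∫⁻ s in σ, ((s : ℝ≥0∞))⁻¹ ∂(μ (v : V)))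
      + (ε u : ℝ≥0∞) * MeasureTheory.Measure.dirac (0 : ℝ≥0) σ

/-- The sequence `{ϑ, t₀, t₁, t₂, …}` obtained by prepending `ϑ` to `t`. -/
def shiftedSeq (ϑ : ℝ) (t : ℕ → ℝ) : ℕ → ℝ := fun n => match n with
  | 0 => ϑ
  | n + 1 => t n

/-- A positive definite sequence of real numbers. -/
def IsPosDefSeq (t : ℕ → ℝ) : Prop :=
  ∀ (n : ℕ) (α : ℕ → ℂ),
    0 ≤ (∑ k ∈ Finset.range (n + 1), ∑ l ∈ Finset.range (n + 1),
        (t (k + l) : ℂ) * α k * (starRingEnd ℂ) (α l)).re ∧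
    (∑ k ∈ Finset.range (n + 1), ∑ l ∈ Finset.range (n + 1),
        (t (k + l) : ℂ) * α k * (starRingEnd ℂ) (α l)).im = 0


section Stmt5Aux
universe u'
variable {H : Type u'} [NormedAddCommGroup H] [InnerProductSpace ℂ H]

lemma pmap_congr (S : H →ₗ.[ℂ] H) {x y : S.domain} (h : (x : H) = (y : H)) : S x = S y := by
  congr 1; exact Subtype.ext h

lemma mem_pmapComp_domain_iff {S T : H →ₗ.[ℂ] H} {x : H} :
    x ∈ (pmapComp S T).domain ↔ ∃ hx : x ∈ T.domain, T ⟨x, hx⟩ ∈ S.domain := by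
  constructor
  · intro h
    exact (Submodule.mem_inf.mp h).1
  · intro h
    exact Submodule.mem_inf.mpr ⟨h, h.choose⟩

lemma pmapComp_apply {S T : H →ₗ.[ℂ] H} {x : H} (hx : x ∈ (pmapComp S T).domain)
    (hxT : x ∈ T.domain) (hT : T ⟨x, hxT⟩ ∈ S.domain) :
    pmapComp S T ⟨x, hx⟩ = S ⟨T ⟨x, hxT⟩, hT⟩ := by
  unfold pmapComp LinearPMap.comp
  rw [LinearMap.compPMap_apply]
  apply pmap_congr
  exact LinearPMap.domRestrict_apply rfl

lemma powApp_eq (S : H →ₗ.[ℂ] H) (n : ℕ) {x : H} (h : x ∈ (pmapPow S n).domain) :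
    powApp S n x = pmapPow S n ⟨x, h⟩ := dif_pos h

lemma powApp_zero (S : H →ₗ.[ℂ] H) (x : H) : powApp S 0 x = x := by
  have h : x ∈ (pmapPow S 0).domain := Submodule.mem_top
  rw [powApp_eq S 0 h]
  rfl

lemma mem_pow_succ_iff (S : H →ₗ.[ℂ] H) (n : ℕ) (x : H) :
    x ∈ (pmapPow S (n+1)).domain ↔ ∃ hx : x ∈ S.domain, S ⟨x, hx⟩ ∈ (pmapPow S n).domain :=
  mem_pmapComp_domain_iff

lemma powApp_succ (S : H →ₗ.[ℂ] H) (n : ℕ) (x : H) (hx : x ∈ (pmapPow S (n+1)).domain)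
    (hxS : x ∈ S.domain) (hS : S ⟨x, hxS⟩ ∈ (pmapPow S n).domain) :
    powApp S (n+1) x = powApp S n (S ⟨x, hxS⟩) := by
  rw [powApp_eq S (n+1) hx, powApp_eq S n hS]
  exact pmapComp_apply hx hxS hS

lemma pow_flip (S : H →ₗ.[ℂ] H) : ∀ (n : ℕ) (x : H),
    (x ∈ (pmapPow S (n+1)).domain ↔
      x ∈ (pmapPow S n).domain ∧ powApp S n x ∈ S.domain) ∧
    (∀ (_ : x ∈ (pmapPow S (n+1)).domain) (h : powApp S n x ∈ S.domain),
      powApp S (n+1) x = S ⟨powApp S n x, h⟩) := by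
  intro n
  induction n with
  | zero =>
    intro x
    constructor
    · rw [mem_pow_succ_iff]
      constructor
      · rintro ⟨hx, -⟩
        refine ⟨Submodule.mem_top, ?_⟩
        rw [powApp_zero]; exact hx
      · rintro ⟨-, hx⟩
        rw [powApp_zero] at hx
        exact ⟨hx, Submodule.mem_top⟩
    · intro h1 h2
      have hx : x ∈ S.domain := by rw [powApp_zero] at h2; exact h2
      rw [powApp_succ S 0 x h1 hx Submodule.mem_top, powApp_zero]
      apply pmap_congr
      simp [powApp_zero]
  | succ n IH =>
    intro x
    constructor
    · constructor
      · intro h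
        obtain ⟨hx, hS⟩ := (mem_pow_succ_iff S (n+1) x).mp h
        obtain ⟨h1, h2⟩ := ((IH (S ⟨x, hx⟩)).1).mp hS
        have hmem : x ∈ (pmapPow S (n+1)).domain := (mem_pow_succ_iff S n x).mpr ⟨hx, h1⟩
        refine ⟨hmem, ?_⟩
        rw [powApp_succ S n x hmem hx h1]
        exact h2
      · rintro ⟨h1, h2⟩
        obtain ⟨hx, hSn⟩ := (mem_pow_succ_iff S n x).mp h1
        rw [powApp_succ S n x h1 hx hSn] at h2
        exact (mem_pow_succ_iff S (n+1) x).mpr ⟨hx, ((IH (S ⟨x, hx⟩)).1).mpr ⟨hSn, h2⟩⟩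
    · intro h1 h2
      obtain ⟨hx, hS⟩ := (mem_pow_succ_iff S (n+1) x).mp h1
      have hSn : S ⟨x, hx⟩ ∈ (pmapPow S n).domain := (((IH (S ⟨x, hx⟩)).1).mp hS).1
      have hmem : x ∈ (pmapPow S (n+1)).domain := (mem_pow_succ_iff S n x).mpr ⟨hx, hSn⟩
      have e1 : powApp S (n+1) x = powApp S n (S ⟨x, hx⟩) := powApp_succ S n x hmem hx hSn
      have h' : powApp S n (S ⟨x, hx⟩) ∈ S.domain := e1 ▸ h2
      have e2 : powApp S (n+2) x = powApp S (n+1) (S ⟨x, hx⟩) :=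
        powApp_succ S (n+1) x h1 hx hS
      rw [e2, (IH (S ⟨x, hx⟩)).2 hS h']
      exact pmap_congr S e1.symm

end Stmt5Aux

section Stmt5Tree
open DirectedTree
variable {V : Type*} {T : DirectedTree V} {lam : V → ℂ}

lemma edge_par {v : V} (h : T.nonRoot v) : T.edge (T.par v) v := by
  rw [DirectedTree.par]
  split
  · next h' => exact h'.choose_spec
  · next h' => exact absurd h h'

lemma par_eq {w v : V} (h : T.edge w v) : T.par v = w :=
  T.parent_unique v _ w (edge_par ⟨w, h⟩) h

lemma mem_chiN_succ {m : ℕ} {u v : V} :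
    v ∈ T.chiN (m+1) u ↔ T.nonRoot v ∧ T.par v ∈ T.chiN m u := by
  constructor
  · rintro hv
    simp only [DirectedTree.chiN, Set.mem_iUnion] at hv
    obtain ⟨w, hw, hvw⟩ := hv
    exact ⟨⟨w, hvw⟩, by rw [par_eq hvw]; exact hw⟩
  · rintro ⟨hnr, hp⟩
    simp only [DirectedTree.chiN, Set.mem_iUnion]
    exact ⟨T.par v, hp, edge_par hnr⟩

lemma pathProd_succ (n : ℕ) (v : V) :
    T.pathProd lam (n+1) v = lam v * T.pathProd lam n (T.par v) := by
  unfold DirectedTree.pathProd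
  rw [Finset.prod_range_succ']
  simp only [Function.iterate_succ_apply, Function.iterate_zero_apply]
  ring

lemma lamMap_indicator (u : V) (m : ℕ) :
    T.lamMap lam (Set.indicator (T.chiN m u) (T.pathProd lam m))
      = Set.indicator (T.chiN (m+1) u) (T.pathProd lam (m+1)) := by
  funext v
  rw [DirectedTree.lamMap]
  by_cases hnr : T.nonRoot v
  · rw [if_pos hnr]
    by_cases hp : T.par v ∈ T.chiN m u
    · rw [Set.indicator_of_mem hp, Set.indicator_of_mem (mem_chiN_succ.mpr ⟨hnr, hp⟩),
        pathProd_succ]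
    · rw [Set.indicator_of_notMem hp, Set.indicator_of_notMem
        (fun hc => hp (mem_chiN_succ.mp hc).2), mul_zero]
  · rw [if_neg hnr, Set.indicator_of_notMem (fun hc => hnr (mem_chiN_succ.mp hc).1)]

lemma memℓp_two_iff (f : V → ℂ) :
    Memℓp f 2 ↔ (∑' v : V, ((‖f v‖₊ : ℝ≥0∞)) ^ 2) ≠ ⊤ := by
  have h2 : (0:ℝ) < (2:ℝ≥0∞).toReal := by norm_num
  rw [memℓp_gen_iff h2]
  have : (fun v => ‖f v‖ ^ (2:ℝ≥0∞).toReal) = fun v => ((‖f v‖₊ ^ 2 : ℝ≥0) : ℝ) := by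
    funext v
    rw [show ((2:ℝ≥0∞).toReal) = (2:ℝ) by norm_num, Real.rpow_two]
    push_cast
    rfl
  rw [this, NNReal.summable_coe]
  rw [show (fun v : V => ((‖f v‖₊ : ℝ≥0∞)) ^ 2) = fun v => ((‖f v‖₊ ^ 2 : ℝ≥0) : ℝ≥0∞) by
    funext v; push_cast; rfl]
  rw [ne_eq, ← ENNReal.tsum_coe_ne_top_iff_summable, ne_eq]

lemma nnnorm_lp_two (f : lp (fun _ : V => ℂ) 2) :
    ((‖f‖₊ : ℝ≥0∞)) ^ 2 = ∑' v : V, ((‖f v‖₊ : ℝ≥0∞)) ^ 2 := by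
  have h2 : (0:ℝ) < (2:ℝ≥0∞).toReal := by norm_num
  have hn := lp.norm_rpow_eq_tsum h2 f
  have hsum : Summable fun v => ((‖f v‖₊ ^ 2 : ℝ≥0) : ℝ) := by
    have := lp.memℓp f
    rw [memℓp_gen_iff h2] at this
    convert this using 2 with v
    rw [show ((2:ℝ≥0∞).toReal) = (2:ℝ) by norm_num, Real.rpow_two]
    push_cast
    rfl
  have hsum' : Summable fun v => (‖f v‖₊ ^ 2 : ℝ≥0) := NNReal.summable_coe.mp hsum
  have key : ‖f‖₊ ^ 2 = ∑' v : V, (‖f v‖₊ ^ 2 : ℝ≥0) := by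
    apply NNReal.coe_injective
    push_cast [NNReal.coe_tsum]
    rw [show ((2:ℝ≥0∞).toReal) = (2:ℝ) by norm_num] at hn
    rw [← Real.rpow_two, hn]
    congr 1
    funext v
    rw [Real.rpow_two]
  calc ((‖f‖₊ : ℝ≥0∞)) ^ 2 = ((‖f‖₊ ^ 2 : ℝ≥0) : ℝ≥0∞) := by norm_cast
    _ = ((∑' v : V, (‖f v‖₊ ^ 2 : ℝ≥0) : ℝ≥0) : ℝ≥0∞) := by rw [key]
    _ = ∑' v : V, ((‖f v‖₊ ^ 2 : ℝ≥0) : ℝ≥0∞) := ENNReal.coe_tsum hsum'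
    _ = ∑' v : V, ((‖f v‖₊ : ℝ≥0∞)) ^ 2 := by norm_cast

lemma tsum_indicator_sq (s : Set V) (g : V → ℂ) :
    (∑' v : V, ((‖(Set.indicator s g) v‖₊ : ℝ≥0∞)) ^ 2)
      = ∑' v : s, ((‖g (v : V)‖₊ : ℝ≥0∞)) ^ 2 := by
  rw [tsum_subtype s (fun v => ((‖g v‖₊ : ℝ≥0∞)) ^ 2)]
  congr 1
  funext v
  by_cases hv : v ∈ s
  · rw [Set.indicator_of_mem hv, Set.indicator_of_mem hv]
  · rw [Set.indicator_of_notMem hv, Set.indicator_of_notMem hv]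
    simp

lemma eVec_coe (T : DirectedTree V) (lam : V → ℂ) (u : V) :
    ⇑(eVec u) = Set.indicator (T.chiN 0 u) (T.pathProd lam 0) := by
  classical
  funext w
  unfold eVec
  by_cases h : w = u
  · subst h
    rw [lp.single_apply_self, Set.indicator_of_mem (show w ∈ T.chiN 0 w from rfl)]
    simp [DirectedTree.pathProd]
  · rw [lp.single_apply_ne 2 u _ h, Set.indicator_of_notMem (by
      simpa [DirectedTree.chiN] using h)]

lemma mem_shift_domain_iff {f : lp (fun _ : V => ℂ) 2} :
    f ∈ (T.shift lam).domain ↔ Memℓp (T.lamMap lam ⇑f) 2 := Iff.rfl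

lemma shift_apply_coe (T : DirectedTree V) (lam : V → ℂ) (f : lp (fun _ : V => ℂ) 2)
    (hf : f ∈ (T.shift lam).domain) :
    (((T.shift lam) ⟨f, hf⟩ : lp (fun _ : V => ℂ) 2) : V → ℂ) = T.lamMap lam ⇑f := rfl

lemma stmt5_main (T : DirectedTree V) (lam : V → ℂ) (u : V) : ∀ n : ℕ,
    (eVec u ∈ (pmapPow (T.shift lam) n).domain ↔
      ∀ m : ℕ, 1 ≤ m → m ≤ n → Memℓp (Set.indicator (T.chiN m u) (T.pathProd lam m)) 2) ∧
    (∀ _ : eVec u ∈ (pmapPow (T.shift lam) n).domain,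
      ⇑(powApp (T.shift lam) n (eVec u)) = Set.indicator (T.chiN n u) (T.pathProd lam n)) := by
  intro n
  induction n with
  | zero =>
    constructor
    · constructor
      · intro _ m h1 h2; omega
      · intro _; exact Submodule.mem_top
    · intro _
      rw [powApp_zero]
      exact eVec_coe T lam u
  | succ n IH =>
    have hflip := pow_flip (T.shift lam) n (eVec u)
    constructor
    · rw [hflip.1]
      constructor
      · rintro ⟨h1, h2⟩ m hm1 hm2
        rcases Nat.lt_or_ge m (n+1) with h | h
        · exact (IH.1.mp h1) m hm1 (by omega)
        · have hm : m = n + 1 := by omega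
          subst hm
          rw [mem_shift_domain_iff, IH.2 h1, lamMap_indicator] at h2
          exact h2
      · intro hall
        have h1 : eVec u ∈ (pmapPow (T.shift lam) n).domain :=
          IH.1.mpr (fun m hm1 hm2 => hall m hm1 (by omega))
        refine ⟨h1, ?_⟩
        rw [mem_shift_domain_iff, IH.2 h1, lamMap_indicator]
        exact hall (n+1) (by omega) le_rfl
    · intro h
      obtain ⟨h1, h2⟩ := hflip.1.mp h
      rw [hflip.2 h h2, shift_apply_coe, IH.2 h1, lamMap_indicator]

end Stmt5Tree

/-- description of the powers of a weighted shift on the basis vectors. -/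
theorem stmt5 {V : Type*} (T : DirectedTree V) (lam : V → ℂ) (u : V) (n : ℕ) :
    (eVec u ∈ (pmapPow (T.shift lam) n).domain ↔
      ∀ m : ℕ, 1 ≤ m → m ≤ n →
        (∑' v : (T.chiN m u), ((‖T.pathProd lam m (v : V)‖₊ : ℝ≥0∞)) ^ 2) ≠ ⊤)
    ∧ (eVec u ∈ (pmapPow (T.shift lam) n).domain →
        ∀ w : V, (powApp (T.shift lam) n (eVec u)) w
          = (T.chiN n u).indicator (fun v => T.pathProd lam n v) w)
    ∧ (eVec u ∈ (pmapPow (T.shift lam) n).domain →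
        ((‖powApp (T.shift lam) n (eVec u)‖₊ : ℝ≥0∞)) ^ 2
          = ∑' v : (T.chiN n u), ((‖T.pathProd lam n (v : V)‖₊ : ℝ≥0∞)) ^ 2) := by
  refine ⟨?_, ?_, ?_⟩
  · refine ((stmt5_main T lam u n).1).trans
      (forall_congr' fun m => imp_congr_right fun _ => imp_congr_right fun _ => ?_)
    rw [memℓp_two_iff, tsum_indicator_sq]
  · intro h w
    rw [(stmt5_main T lam u n).2 h]
  · intro h
    rw [nnnorm_lp_two, (stmt5_main T lam u n).2 h, tsum_indicator_sq]

end
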